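/- arXiv:2201.00326 — 2 statements merged into one kernel-verified Lean document; each statement's English description precedes it below -/
import Mathlib

section
/- Let φ be a Schwartz function on ℝ whose Fourier transform φ̂ is supported in [−1, 1]. Then φ̂(0) − φ(0) + ∫_{-∞}^{∞} φ̂(x)|x| dx = ∫_{-∞}^{∞} φ(x) (1 − sin²(πx)/(πx)²) dx. -/
open Real Complex MeasureTheory FourierTransform intervalIntegral

noncomputable def triC (ξ : ℝ) : ℂ := ((max 0 (1 - |ξ|) : ℝ) : ℂ)

lemma triC_cont : Continuous triC :=
  Complex.continuous_ofReal.comp (continuous_const.max (continuous_const.sub continuous_abs))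

lemma triC_eq_zero {ξ : ℝ} (h : ξ ∉ Set.Icc (-1 : ℝ) 1) : triC ξ = 0 := by
  rw [Set.mem_Icc, ← abs_le, not_le] at h
  simp [triC, max_eq_left (by linarith : 1 - |ξ| ≤ 0)]

lemma triC_supp : Function.support triC ⊆ Set.Icc (-1 : ℝ) 1 :=
  Function.support_subset_iff'.mpr fun _ h => triC_eq_zero h

lemma triC_hcs : HasCompactSupport triC :=
  HasCompactSupport.of_support_subset_isCompact isCompact_Icc triC_supp

lemma fourier_triC {x : ℝ} (hx : x ≠ 0) :
    FourierTransform.fourier triC x = ((Real.sin (π * x) ^ 2 / (π * x) ^ 2 : ℝ) : ℂ) := by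
  have hπx : π * x ≠ 0 := mul_ne_zero Real.pi_ne_zero hx
  set c : ℂ := ((-2 * π * x : ℝ) : ℂ) * Complex.I with hc
  have hcne : c ≠ 0 :=
    mul_ne_zero (Complex.ofReal_ne_zero.mpr (mul_ne_zero (mul_ne_zero (by norm_num) Real.pi_ne_zero) hx)) Complex.I_ne_zero
  -- the integrand
  have key : 𝓕 triC x = ∫ v in (-1 : ℝ)..1, Complex.exp (v * c) * triC v := by
    rw [Real.fourier_real_eq_integral_exp_smul]
    have h1 : (∫ v : ℝ, Complex.exp (↑(-2 * π * v * x) * Complex.I) • triC v)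
        = ∫ v in Set.Icc (-1 : ℝ) 1, Complex.exp (↑v * c) * triC v := by
      rw [← MeasureTheory.setIntegral_eq_integral_of_forall_compl_eq_zero
        (s := Set.Icc (-1 : ℝ) 1) (fun v hv => by
          simp [triC_eq_zero hv])]
      refine MeasureTheory.integral_congr_ae (Filter.Eventually.of_forall fun v => ?_)
      simp only [smul_eq_mul, hc]
      rw [show ((-2*π*v*x : ℝ) : ℂ) * Complex.I = ↑v * (↑(-2*π*x) * Complex.I) by
        push_cast; ring]
    rw [h1, MeasureTheory.integral_Icc_eq_integral_Ioc,
      ← intervalIntegral.integral_of_le (by norm_num : (-1:ℝ) ≤ 1)]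
  rw [key]
  have hcont : Continuous fun v : ℝ => Complex.exp (↑v * c) * triC v :=
    ((Complex.continuous_ofReal.mul continuous_const).cexp).mul triC_cont
  have hsplit : (∫ v in (-1 : ℝ)..1, Complex.exp (↑v * c) * triC v)
      = (∫ v in (-1 : ℝ)..0, Complex.exp (↑v * c) * triC v)
        + ∫ v in (0 : ℝ)..1, Complex.exp (↑v * c) * triC v :=
    (intervalIntegral.integral_add_adjacent_intervals
      (hcont.intervalIntegrable _ _) (hcont.intervalIntegrable _ _)).symm
  -- derivative facts
  have hderiv1 : ∀ v : ℝ, HasDerivAt (fun v : ℝ =>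
      ((1 : ℂ) - ↑v) * Complex.exp (↑v * c) / c + Complex.exp (↑v * c) / c ^ 2)
      (Complex.exp (↑v * c) * ((1 : ℂ) - ↑v)) v := by
    intro v
    have hv : HasDerivAt (fun v : ℝ => (↑v : ℂ)) 1 v := (hasDerivAt_id v).ofReal_comp
    have hvc : HasDerivAt (fun v : ℝ => (↑v : ℂ) * c) c v := by
      simpa using hv.mul_const c
    have hexp : HasDerivAt (fun v : ℝ => Complex.exp (↑v * c))
        (Complex.exp (↑v * c) * c) v := by simpa using hvc.cexp
    have hlin : HasDerivAt (fun v : ℝ => (1 : ℂ) - ↑v) (-1) v := by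
      exact ((hasDerivAt_const v (1:ℂ)).sub hv).congr_deriv (by ring)
    have := ((hlin.mul hexp).div_const c).add (hexp.div_const (c ^ 2))
    refine this.congr_deriv ?_
    field_simp
    ring
  have hderiv2 : ∀ v : ℝ, HasDerivAt (fun v : ℝ =>
      ((1 : ℂ) + ↑v) * Complex.exp (↑v * c) / c - Complex.exp (↑v * c) / c ^ 2)
      (Complex.exp (↑v * c) * ((1 : ℂ) + ↑v)) v := by
    intro v
    have hv : HasDerivAt (fun v : ℝ => (↑v : ℂ)) 1 v := (hasDerivAt_id v).ofReal_comp
    have hvc : HasDerivAt (fun v : ℝ => (↑v : ℂ) * c) c v := by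
      simpa using hv.mul_const c
    have hexp : HasDerivAt (fun v : ℝ => Complex.exp (↑v * c))
        (Complex.exp (↑v * c) * c) v := by simpa using hvc.cexp
    have hlin : HasDerivAt (fun v : ℝ => (1 : ℂ) + ↑v) 1 v := by
      exact ((hasDerivAt_const v (1:ℂ)).add hv).congr_deriv (by ring)
    have := ((hlin.mul hexp).div_const c).sub (hexp.div_const (c ^ 2))
    refine this.congr_deriv ?_
    field_simp
    ring
  have hint1 : (∫ v in (0 : ℝ)..1, Complex.exp (↑v * c) * triC v)
      = Complex.exp c / c ^ 2 - (1 / c + 1 / c ^ 2) := by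
    have hcongr : (∫ v in (0 : ℝ)..1, Complex.exp (↑v * c) * triC v)
        = ∫ v in (0 : ℝ)..1, Complex.exp (↑v * c) * ((1 : ℂ) - ↑v) := by
      refine intervalIntegral.integral_congr fun v hv => ?_
      rw [Set.uIcc_of_le (by norm_num : (0:ℝ) ≤ 1), Set.mem_Icc] at hv
      have : triC v = ((1 - v : ℝ) : ℂ) := by
        simp [triC, _root_.abs_of_nonneg hv.1, max_eq_right (by linarith : (0:ℝ) ≤ 1 - v)]
      rw [this]; push_cast; ring
    rw [hcongr, intervalIntegral.integral_eq_sub_of_hasDerivAt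
      (fun v _ => hderiv1 v)
      (((Complex.continuous_ofReal.mul continuous_const).cexp.mul
        (continuous_const.sub Complex.continuous_ofReal)).intervalIntegrable _ _)]
    push_cast
    simp
  have hint2 : (∫ v in (-1 : ℝ)..0, Complex.exp (↑v * c) * triC v)
      = (1 / c - 1 / c ^ 2) + Complex.exp (-c) / c ^ 2 := by
    have hcongr : (∫ v in (-1 : ℝ)..0, Complex.exp (↑v * c) * triC v)
        = ∫ v in (-1 : ℝ)..0, Complex.exp (↑v * c) * ((1 : ℂ) + ↑v) := by
      refine intervalIntegral.integral_congr fun v hv => ?_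
      rw [Set.uIcc_of_le (by norm_num : (-1:ℝ) ≤ 0), Set.mem_Icc] at hv
      have : triC v = ((1 + v : ℝ) : ℂ) := by
        simp [triC, _root_.abs_of_nonpos hv.2, max_eq_right (by linarith : (0:ℝ) ≤ 1 + v)]
      rw [this]; push_cast; ring
    rw [hcongr, intervalIntegral.integral_eq_sub_of_hasDerivAt
      (fun v _ => hderiv2 v)
      (((Complex.continuous_ofReal.mul continuous_const).cexp.mul
        (continuous_const.add Complex.continuous_ofReal)).intervalIntegrable _ _)]
    push_cast
    simp
  rw [hsplit, hint1, hint2]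
  -- now the algebra
  have hexpc : Complex.exp c + Complex.exp (-c) = ((2 * Real.cos (2 * π * x) : ℝ) : ℂ) := by
    have h1 : c = ((-2 * π * x : ℝ) : ℂ) * Complex.I := hc
    have h2 : -c = ((-(-2 * π * x) : ℝ) : ℂ) * Complex.I := by rw [h1]; push_cast; ring
    rw [h1, h2, Complex.exp_mul_I, Complex.exp_mul_I]
    rw [← Complex.ofReal_cos, ← Complex.ofReal_sin, ← Complex.ofReal_cos, ← Complex.ofReal_sin]
    rw [Real.cos_neg, Real.sin_neg]
    have : (-2 : ℝ) * π * x = -(2 * π * x) := by ring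
    rw [this, Real.cos_neg, Real.sin_neg]
    push_cast
    ring
  have hcsq : c ^ 2 = ((-(4 * π ^ 2 * x ^ 2) : ℝ) : ℂ) := by
    rw [hc]
    push_cast
    rw [mul_pow, Complex.I_sq]
    ring
  have hreal : (2 * Real.cos (2 * π * x) - 2) / (-(4 * π ^ 2 * x ^ 2))
      = Real.sin (π * x) ^ 2 / (π * x) ^ 2 := by
    have hcos : Real.cos (2 * π * x) = 1 - 2 * Real.sin (π * x) ^ 2 := by
      have : 2 * π * x = 2 * (π * x) := by ring
      rw [this, Real.cos_two_mul]
      nlinarith [Real.sin_sq_add_cos_sq (π * x)]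
    rw [hcos]
    field_simp
    ring
  calc (1 / c - 1 / c ^ 2 + Complex.exp (-c) / c ^ 2) + (Complex.exp c / c ^ 2 - (1 / c + 1 / c ^ 2))
      = (Complex.exp c + Complex.exp (-c) - 2) / c ^ 2 := by ring
    _ = (((2 * Real.cos (2 * π * x) - 2 : ℝ)) : ℂ) / ((-(4 * π ^ 2 * x ^ 2) : ℝ) : ℂ) := by
        rw [hexpc, hcsq]; push_cast; ring
    _ = (((2 * Real.cos (2 * π * x) - 2) / (-(4 * π ^ 2 * x ^ 2)) : ℝ) : ℂ) := by norm_cast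
    _ = ((Real.sin (π * x) ^ 2 / (π * x) ^ 2 : ℝ) : ℂ) := by rw [hreal]

lemma fourierIntegral_zero_eq_integral (f : ℝ → ℂ) : FourierTransform.fourier f 0 = ∫ x, f x := by
  rw [Real.fourier_real_eq]
  simp


/-- For a Schwartz function `φ` with `supp φ̂ ⊆ [-1,1]`,
`φ̂(0) − φ(0) + ∫ φ̂(x)|x| dx = ∫ φ(x)(1 − sin²(πx)/(πx)²) dx`. -/
theorem weighted_density_identity (φ : SchwartzMap ℝ ℂ)
    (hsupp : Function.support (FourierTransform.fourier (⇑φ : ℝ → ℂ)) ⊆ Set.Icc (-1 : ℝ) 1) :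
    FourierTransform.fourier (⇑φ : ℝ → ℂ) 0 - φ 0
        + ∫ x : ℝ, FourierTransform.fourier (⇑φ : ℝ → ℂ) x * ((|x| : ℝ) : ℂ)
      = ∫ x : ℝ, φ x * ((1 - Real.sin (π * x) ^ 2 / (π * x) ^ 2 : ℝ) : ℂ) := by
  set ψ : ℝ → ℂ := FourierTransform.fourier ⇑φ with hψ
  have hφint : Integrable ⇑φ := φ.integrable
  have hψcoe : ⇑(SchwartzMap.fourierTransformCLM ℂ φ) = ψ := by
    rw [SchwartzMap.fourierTransformCLM_apply]; rfl
  have hψint : Integrable ψ := hψcoe ▸ (SchwartzMap.fourierTransformCLM ℂ φ).integrable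
  have hψcont : Continuous ψ := hψcoe ▸ (SchwartzMap.fourierTransformCLM ℂ φ).continuous
  -- φ 0 = ∫ ψ
  have hinv : φ 0 = ∫ ξ, ψ ξ := by
    rw [← hφint.fourierInv_fourier_eq hψint φ.continuous.continuousAt,
      Real.fourierInv_eq]
    simp [hψ]
  -- ψ 0 = ∫ φ
  have hψ0 : ψ 0 = ∫ x, φ x := fourierIntegral_zero_eq_integral _
  -- integrability of ψ * |ξ| and ψ * triC
  have hψabs_cont : Continuous fun ξ : ℝ => ψ ξ * ((|ξ| : ℝ) : ℂ) :=
    hψcont.mul (Complex.continuous_ofReal.comp continuous_abs)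
  have hψabs_int : Integrable fun ξ : ℝ => ψ ξ * ((|ξ| : ℝ) : ℂ) :=
    hψabs_cont.integrable_of_hasCompactSupport
      (HasCompactSupport.of_support_subset_isCompact isCompact_Icc
        (fun ξ hξ => hsupp (Function.support_mul_subset_left _ _ hξ)))
  -- the s function
  set s : ℝ → ℂ := fun x => ((Real.sin (π * x) ^ 2 / (π * x) ^ 2 : ℝ) : ℂ) with hs
  have hsmeas : AEStronglyMeasurable s (volume : Measure ℝ) := by
    refine (Complex.measurable_ofReal.comp ?_).aestronglyMeasurable
    exact ((Real.measurable_sin.comp (measurable_id.const_mul π)).pow_const 2).div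
      (((measurable_id.const_mul π)).pow_const 2)
  have hsbdd : ∀ x : ℝ, ‖s x‖ ≤ 1 := by
    intro x
    rw [hs]
    simp only [Complex.norm_real, Real.norm_eq_abs]
    rcases eq_or_ne x 0 with rfl | hx
    · simp
    · have h1 : Real.sin (π * x) ^ 2 ≤ (π * x) ^ 2 := Real.sin_sq_le_sq
      have h2 : (0:ℝ) < (π * x) ^ 2 := by positivity
      rw [_root_.abs_of_nonneg (by positivity)]
      exact (div_le_one h2).mpr h1
  have hφs_int : Integrable fun x : ℝ => φ x * s x := by
    have := hφint.bdd_mul hsmeas (Filter.Eventually.of_forall hsbdd)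
    simpa [mul_comm] using this
  -- RHS split
  have hrhs : (∫ x : ℝ, φ x * ((1 - Real.sin (π * x) ^ 2 / (π * x) ^ 2 : ℝ) : ℂ))
      = (∫ x, φ x) - ∫ x, φ x * s x := by
    rw [← MeasureTheory.integral_sub hφint hφs_int]
    congr 1
    funext x
    rw [hs]
    push_cast
    ring
  -- ∫ φ * s = ∫ φ * 𝓕 triC  (a.e. since they agree off 0)
  have hae : (∫ x, φ x * s x) = ∫ x, φ x * FourierTransform.fourier triC x := by
    refine MeasureTheory.integral_congr_ae ?_
    have h0 : ∀ᵐ x : ℝ, x ≠ 0 := by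
      refine (MeasureTheory.ae_iff).mpr ?_
      simpa using Real.volume_singleton (a := 0)
    filter_upwards [h0] with x hx
    rw [fourier_triC hx]
  -- multiplication formula
  have htri_int : Integrable triC := triC_cont.integrable_of_hasCompactSupport triC_hcs
  have hflipL : (innerₗ ℝ).flip = innerₗ ℝ := by
    apply LinearMap.ext; intro x; apply LinearMap.ext; intro y
    exact real_inner_comm x y
  have hmul : (∫ ξ, ψ ξ * triC ξ) = ∫ x, φ x * FourierTransform.fourier triC x := by
    have := VectorFourier.integral_fourierIntegral_smul_eq_flip
      (e := Real.fourierChar) (L := innerₗ ℝ) (μ := volume) (ν := volume)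
      (f := ⇑φ) (g := triC) Real.continuous_fourierChar
      (by exact continuous_inner) hφint htri_int
    rw [hflipL] at this
    simp only [smul_eq_mul] at this; exact this
  -- ∫ ψ * triC = ∫ ψ * (1 - |ξ|)
  have htri_eq : (∫ ξ, ψ ξ * triC ξ) = ∫ ξ, ψ ξ * ((1 - |ξ| : ℝ) : ℂ) := by
    refine MeasureTheory.integral_congr_ae (Filter.Eventually.of_forall fun ξ => ?_)
    rcases eq_or_ne (ψ ξ) 0 with h | h
    · simp [h]
    · have hmem := hsupp (Function.mem_support.mpr h)
      rw [Set.mem_Icc, ← abs_le] at hmem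
      congr 1
      simp [triC, max_eq_right (by linarith : (0:ℝ) ≤ 1 - |ξ|)]
  have hsub : (∫ ξ, ψ ξ * ((1 - |ξ| : ℝ) : ℂ))
      = (∫ ξ, ψ ξ) - ∫ ξ, ψ ξ * ((|ξ| : ℝ) : ℂ) := by
    rw [← MeasureTheory.integral_sub hψint hψabs_int]
    congr 1
    funext ξ
    push_cast
    ring
  rw [hrhs, ← hψ0, hae, ← hmul, htri_eq, hsub, hinv]
  ring
end

section
/- Let φ be a Schwartz function on ℝ whose Fourier transform is supported in [−α, α] for some α > 0. Then for any real a > −1, ∑_p p^a · φ̂(log p / log q) · log p = O(q^{α(a+1)}) as q → ∞, where the sum is over all primes p. -/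
open Filter MeasureTheory

private lemma cheb_log_sum (n : ℕ) :
    ∑ p ∈ Nat.primesBelow n, Real.log p ≤ n * Real.log 4 := by
  have h1 : Nat.primesBelow n ⊆ Finset.filter Nat.Prime (Finset.range (n + 1)) := by
    intro p hp
    rw [Nat.mem_primesBelow] at hp
    exact Finset.mem_filter.2 ⟨Finset.mem_range.2 (by omega), hp.2⟩
  have h2 : ∑ p ∈ Nat.primesBelow n, Real.log p
      ≤ ∑ p ∈ Finset.filter Nat.Prime (Finset.range (n + 1)), Real.log p := by
    refine Finset.sum_le_sum_of_subset_of_nonneg h1 (fun p hp _ => Real.log_nonneg ?_)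
    exact_mod_cast (Finset.mem_filter.1 hp).2.one_lt.le
  have h3 : ∑ p ∈ Finset.filter Nat.Prime (Finset.range (n + 1)), Real.log p
      = Real.log ((primorial n : ℕ) : ℝ) := by
    rw [primorial, Nat.cast_prod, Real.log_prod]
    intro p hp
    exact_mod_cast (Finset.mem_filter.1 hp).2.pos.ne'
  have h4 : ((primorial n : ℕ) : ℝ) ≤ ((4 ^ n : ℕ) : ℝ) := by
    exact_mod_cast primorial_le_4_pow n
  have h5 : (0:ℝ) < ((primorial n : ℕ) : ℝ) := by
    have : 0 < primorial n := by
      refine Finset.prod_pos fun p hp => (Finset.mem_filter.1 hp).2.pos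
    exact_mod_cast this
  calc ∑ p ∈ Nat.primesBelow n, Real.log p
      ≤ Real.log ((primorial n : ℕ) : ℝ) := h3 ▸ h2
    _ ≤ Real.log (((4:ℕ) ^ n : ℕ) : ℝ) := Real.log_le_log h5 h4
    _ = n * Real.log 4 := by
        push_cast
        rw [Real.log_pow]

private lemma prime_rpow_sum_bound {a : ℝ} (ha : -1 < a) :
    ∃ C > 0, ∀ N : ℕ, ∑ p ∈ Nat.primesBelow (N + 1), (p : ℝ) ^ a * Real.log p
      ≤ C * (N : ℝ) ^ (a + 1) := by
  classical
  set K : ℝ := max 1 ((2:ℝ) ^ a) with hKdef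
  have hK1 : (1:ℝ) ≤ K := le_max_left _ _
  have hKpos : (0:ℝ) < K := lt_of_lt_of_le one_pos hK1
  have h2a : (0:ℝ) < (2:ℝ) ^ a := Real.rpow_pos_of_pos two_pos a
  set D : ℝ := 2 * K * Real.log 4 / (2:ℝ) ^ a with hDdef
  have hDpos : 0 < D := by
    apply div_pos _ h2a
    have : (0:ℝ) < Real.log 4 := Real.log_pos (by norm_num)
    positivity
  set r : ℝ := (2:ℝ) ^ (-(a + 1)) with hrdef
  have hrpos : 0 < r := Real.rpow_pos_of_pos two_pos _
  have hrlt : r < 1 := Real.rpow_lt_one_of_one_lt_of_neg one_lt_two (by linarith)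
  set C : ℝ := D / (1 - r) with hCdef
  have hCpos : 0 < C := div_pos hDpos (by linarith)
  have hCr : C * r + D ≤ C := by
    have h1 : C * (1 - r) = D := by
      rw [hCdef]
      exact div_mul_cancel₀ D (ne_of_gt (by linarith))
    nlinarith
  refine ⟨C, hCpos, ?_⟩
  intro N
  induction N using Nat.strong_induction_on with
  | _ N ih =>
    rcases Nat.eq_zero_or_pos N with h0 | hN
    · subst h0
      have hpb : Nat.primesBelow 1 = ∅ := by decide
      rw [hpb, Finset.sum_empty, Nat.cast_zero, Real.zero_rpow (by linarith), mul_zero]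
    · have hN1 : (1:ℝ) ≤ (N:ℝ) := by exact_mod_cast hN
      have hNpos : (0:ℝ) < (N:ℝ) := by linarith
      have hN2 : (0:ℝ) < (N:ℝ) / 2 := by linarith
      set M : ℕ := N / 2 with hMdef
      have hMlt : M < N := Nat.div_lt_self hN one_lt_two
      have hsub : Nat.primesBelow (M + 1) ⊆ Nat.primesBelow (N + 1) := by
        intro p hp
        rw [Nat.mem_primesBelow] at *
        exact ⟨by omega, hp.2⟩
      have hsplit := Finset.sum_sdiff (f := fun p : ℕ => (p : ℝ) ^ a * Real.log p) hsub
      -- bound on the sdiff part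
      have hdiff : ∑ p ∈ Nat.primesBelow (N + 1) \ Nat.primesBelow (M + 1),
          (p : ℝ) ^ a * Real.log p ≤ D * (N : ℝ) ^ (a + 1) := by
        have hstep : ∀ p ∈ Nat.primesBelow (N + 1) \ Nat.primesBelow (M + 1),
            (p : ℝ) ^ a * Real.log p ≤ (K * ((N:ℝ)/2) ^ a) * Real.log p := by
          intro p hp
          rw [Finset.mem_sdiff, Nat.mem_primesBelow, Nat.mem_primesBelow] at hp
          obtain ⟨⟨hpN, hpp⟩, hnot⟩ := hp
          have hpM : M + 1 ≤ p := by
            by_contra h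
            exact hnot ⟨by omega, hpp⟩
          have hple : (p:ℝ) ≤ (N:ℝ) := by exact_mod_cast Nat.lt_succ_iff.1 hpN
          have hpge : (N:ℝ)/2 ≤ (p:ℝ) := by
            have : N ≤ 2 * p := by omega
            have := (Nat.cast_le (α := ℝ)).2 this
            push_cast at this
            linarith
          have hlogp : 0 ≤ Real.log p := Real.log_nonneg (by exact_mod_cast hpp.one_lt.le)
          have hbase : (p:ℝ) ^ a ≤ K * ((N:ℝ)/2) ^ a := by
            rcases le_or_gt 0 a with hc | hc
            · have h1 : (p:ℝ) ^ a ≤ (N:ℝ) ^ a :=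
                Real.rpow_le_rpow (by positivity) hple hc
              have h2 : (N:ℝ) ^ a = (2:ℝ) ^ a * ((N:ℝ)/2) ^ a := by
                rw [← Real.mul_rpow (by norm_num) hN2.le]
                ring_nf
              have h3 : (2:ℝ) ^ a ≤ K := le_max_right _ _
              calc (p:ℝ) ^ a ≤ (2:ℝ) ^ a * ((N:ℝ)/2) ^ a := by rw [← h2]; exact h1
                _ ≤ K * ((N:ℝ)/2) ^ a := by
                    apply mul_le_mul_of_nonneg_right h3 (Real.rpow_nonneg hN2.le a)
            · have h1 : (p:ℝ) ^ a ≤ ((N:ℝ)/2) ^ a :=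
                Real.rpow_le_rpow_of_nonpos hN2 hpge hc.le
              calc (p:ℝ) ^ a ≤ ((N:ℝ)/2) ^ a := h1
                _ ≤ K * ((N:ℝ)/2) ^ a :=
                    le_mul_of_one_le_left (Real.rpow_nonneg hN2.le a) hK1
          exact mul_le_mul_of_nonneg_right hbase hlogp
        have hs1 : ∑ p ∈ Nat.primesBelow (N + 1) \ Nat.primesBelow (M + 1),
            (p : ℝ) ^ a * Real.log p
            ≤ (K * ((N:ℝ)/2) ^ a) * ∑ p ∈ Nat.primesBelow (N + 1) \ Nat.primesBelow (M + 1),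
                Real.log p := by
          rw [Finset.mul_sum]
          exact Finset.sum_le_sum hstep
        have hs2 : ∑ p ∈ Nat.primesBelow (N + 1) \ Nat.primesBelow (M + 1), Real.log p
            ≤ (N + 1 : ℝ) * Real.log 4 := by
          refine le_trans ?_ (by exact_mod_cast cheb_log_sum (N + 1))
          refine Finset.sum_le_sum_of_subset_of_nonneg Finset.sdiff_subset ?_
          intro p hp _
          exact Real.log_nonneg
            (by exact_mod_cast (Nat.prime_of_mem_primesBelow hp).one_lt.le)
        have hKN : 0 ≤ K * ((N:ℝ)/2) ^ a := by positivity
        have hlog4 : (0:ℝ) < Real.log 4 := Real.log_pos (by norm_num)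
        have hNa : (0:ℝ) < (N:ℝ) ^ a := Real.rpow_pos_of_pos hNpos a
        have hrw : ((N:ℝ)/2) ^ a = (N:ℝ) ^ a / (2:ℝ) ^ a :=
          Real.div_rpow hNpos.le (by norm_num : (0:ℝ) ≤ 2) a
        have hNa1 : (N:ℝ) ^ (a + 1) = (N:ℝ) ^ a * (N:ℝ) :=
          Real.rpow_add_one hNpos.ne' a
        calc ∑ p ∈ Nat.primesBelow (N + 1) \ Nat.primesBelow (M + 1),
              (p : ℝ) ^ a * Real.log p
            ≤ (K * ((N:ℝ)/2) ^ a) * ((N + 1 : ℝ) * Real.log 4) :=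
              le_trans hs1 (mul_le_mul_of_nonneg_left hs2 hKN)
          _ ≤ (K * ((N:ℝ)/2) ^ a) * ((2 * (N:ℝ)) * Real.log 4) := by
              apply mul_le_mul_of_nonneg_left _ hKN
              apply mul_le_mul_of_nonneg_right _ hlog4.le
              linarith
          _ = D * (N : ℝ) ^ (a + 1) := by
              rw [hrw, hNa1, hDdef]
              field_simp
      -- induction hypothesis on M
      have hih : ∑ p ∈ Nat.primesBelow (M + 1), (p : ℝ) ^ a * Real.log p
          ≤ C * (M : ℝ) ^ (a + 1) := ih M hMlt
      have hMr : C * (M : ℝ) ^ (a + 1) ≤ C * (r * (N : ℝ) ^ (a + 1)) := by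
        apply mul_le_mul_of_nonneg_left _ hCpos.le
        have h1 : (M:ℝ) ≤ (N:ℝ)/2 := by
          have := Nat.cast_div_le (α := ℝ) (m := N) (n := 2)
          simpa using this
        have h2 : (M:ℝ) ^ (a+1) ≤ ((N:ℝ)/2) ^ (a+1) :=
          Real.rpow_le_rpow (Nat.cast_nonneg M) h1 (by linarith)
        have h3 : ((N:ℝ)/2) ^ (a+1) = r * (N:ℝ) ^ (a+1) := by
          rw [Real.div_rpow hNpos.le (by norm_num : (0:ℝ) ≤ 2) (a+1), hrdef,
            Real.rpow_neg (by norm_num)]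
          field_simp
        linarith [h2, h3]
      have hsum : ∑ p ∈ Nat.primesBelow (N + 1), (p : ℝ) ^ a * Real.log p
          = (∑ p ∈ Nat.primesBelow (N + 1) \ Nat.primesBelow (M + 1),
              (p : ℝ) ^ a * Real.log p)
            + ∑ p ∈ Nat.primesBelow (M + 1), (p : ℝ) ^ a * Real.log p := hsplit.symm
      have hNrpow : (0:ℝ) ≤ (N:ℝ) ^ (a + 1) := Real.rpow_nonneg hNpos.le _
      calc ∑ p ∈ Nat.primesBelow (N + 1), (p : ℝ) ^ a * Real.log p
          ≤ D * (N : ℝ) ^ (a + 1) + C * (r * (N : ℝ) ^ (a + 1)) := by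
            rw [hsum]; exact add_le_add hdiff (le_trans hih hMr)
        _ ≤ C * (N : ℝ) ^ (a + 1) := by nlinarith [hCr, hNrpow]

/-- For a Schwartz function `φ` with `supp φ̂ ⊆ [-α, α]` and `a > -1`,
`∑_p p^a φ̂(log p / log q) log p = O(q^{α(a+1)})` as `q → ∞`. -/
theorem prime_sum_fourier_bigO (φ : SchwartzMap ℝ ℂ) (α : ℝ) (hα : 0 < α)
    (hsupp : Function.support (FourierTransform.fourier (⇑φ : ℝ → ℂ)) ⊆ Set.Icc (-α) α)
    (a : ℝ) (ha : a > -1) :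
    (fun q : ℝ =>
        ∑' p : Nat.Primes,
          ((p : ℝ) ^ a : ℝ) * FourierTransform.fourier (⇑φ : ℝ → ℂ) (Real.log p / Real.log q)
            * ((Real.log p : ℝ) : ℂ))
      =O[atTop] fun q : ℝ => q ^ (α * (a + 1)) := by
  classical
  obtain ⟨C, hCpos, hC⟩ := prime_rpow_sum_bound ha
  set B : ℝ := ∫ x, ‖φ x‖ with hBdef
  have hB : ∀ w : ℝ, ‖FourierTransform.fourier (⇑φ : ℝ → ℂ) w‖ ≤ B := fun w =>
    VectorFourier.norm_fourierIntegral_le_integral_norm _ _ _ _ _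
  have hBnn : 0 ≤ B := integral_nonneg fun x => norm_nonneg _
  rw [Asymptotics.isBigO_iff]
  refine ⟨B * C, ?_⟩
  filter_upwards [Filter.eventually_ge_atTop (3:ℝ)] with q hq
  have hq1 : (1:ℝ) < q := by linarith
  have hq0 : (0:ℝ) < q := by linarith
  have hlogq : 0 < Real.log q := Real.log_pos hq1
  set N : ℕ := ⌊q ^ α⌋₊ with hNdef
  set s : Finset Nat.Primes := (Nat.primesBelow (N + 1)).subtype Nat.Prime with hsdef
  have hzero : ∀ p : Nat.Primes, p ∉ s →
      ((p : ℝ) ^ a : ℝ) * FourierTransform.fourier (⇑φ : ℝ → ℂ) (Real.log p / Real.log q)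
        * ((Real.log p : ℝ) : ℂ) = 0 := by
    intro p hp
    have hmem : (p : ℕ) ∉ Nat.primesBelow (N + 1) := by
      intro h
      exact hp (Finset.mem_subtype.2 h)
    have hgt : N < (p : ℕ) := by
      by_contra h
      exact hmem (Nat.mem_primesBelow.2 ⟨by omega, p.2⟩)
    have hqα : q ^ α < ((p : ℕ) : ℝ) := by
      have := (Nat.floor_lt (Real.rpow_nonneg hq0.le α)).1 hgt
      exact this
    have hlog : α * Real.log q < Real.log ((p : ℕ) : ℝ) := by
      have h1 : Real.log (q ^ α) < Real.log ((p : ℕ) : ℝ) :=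
        Real.log_lt_log (Real.rpow_pos_of_pos hq0 α) hqα
      rwa [Real.log_rpow hq0] at h1
    have hdiv : α < Real.log ((p : ℕ) : ℝ) / Real.log q :=
      (lt_div_iff₀ hlogq).2 (by linarith)
    have hnot : Real.log ((p : ℕ) : ℝ) / Real.log q ∉ Set.Icc (-α) α := by
      intro h
      exact absurd h.2 (not_le.2 hdiv)
    have hz : FourierTransform.fourier (⇑φ : ℝ → ℂ) (Real.log ((p : ℕ) : ℝ) / Real.log q) = 0 := by
      by_contra h
      exact hnot (hsupp (Function.mem_support.2 h))
    rw [hz, mul_zero, zero_mul]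
  rw [tsum_eq_sum hzero]
  have hbound : ‖∑ p ∈ s,
      ((p : ℝ) ^ a : ℝ) * FourierTransform.fourier (⇑φ : ℝ → ℂ) (Real.log p / Real.log q)
        * ((Real.log p : ℝ) : ℂ)‖ ≤ B * (C * (N : ℝ) ^ (a + 1)) := by
    calc ‖∑ p ∈ s,
        ((p : ℝ) ^ a : ℝ) * FourierTransform.fourier (⇑φ : ℝ → ℂ) (Real.log p / Real.log q)
          * ((Real.log p : ℝ) : ℂ)‖
        ≤ ∑ p ∈ s, ‖((p : ℝ) ^ a : ℝ) * FourierTransform.fourier (⇑φ : ℝ → ℂ) (Real.log p / Real.log q)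
            * ((Real.log p : ℝ) : ℂ)‖ := norm_sum_le _ _
      _ ≤ ∑ p ∈ s, B * (((p : ℕ) : ℝ) ^ a * Real.log ((p : ℕ) : ℝ)) := by
          refine Finset.sum_le_sum fun p _ => ?_
          have h2le : (1:ℝ) ≤ ((p : ℕ) : ℝ) := by exact_mod_cast p.2.one_lt.le
          have hlognn : 0 ≤ Real.log ((p : ℕ) : ℝ) := Real.log_nonneg h2le
          have hrnn : 0 ≤ ((p : ℕ) : ℝ) ^ a := Real.rpow_nonneg (by linarith) a
          rw [norm_mul, norm_mul, Complex.norm_real, Complex.norm_real,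
            Real.norm_eq_abs, Real.norm_eq_abs, abs_of_nonneg hrnn, abs_of_nonneg hlognn]
          calc ((p : ℕ) : ℝ) ^ a * ‖FourierTransform.fourier (⇑φ : ℝ → ℂ) (Real.log ((p : ℕ) : ℝ) / Real.log q)‖
              * Real.log ((p : ℕ) : ℝ)
              ≤ ((p : ℕ) : ℝ) ^ a * B * Real.log ((p : ℕ) : ℝ) := by
                apply mul_le_mul_of_nonneg_right _ hlognn
                exact mul_le_mul_of_nonneg_left (hB _) hrnn
            _ = B * (((p : ℕ) : ℝ) ^ a * Real.log ((p : ℕ) : ℝ)) := by ring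
      _ = B * ∑ p ∈ s, ((p : ℕ) : ℝ) ^ a * Real.log ((p : ℕ) : ℝ) := by
          rw [Finset.mul_sum]
      _ = B * ∑ n ∈ Nat.primesBelow (N + 1), (n : ℝ) ^ a * Real.log n := by
          congr 1
          exact Finset.sum_subtype_of_mem (s := Nat.primesBelow (N + 1)) (p := Nat.Prime)
            (fun n : ℕ => (n : ℝ) ^ a * Real.log n)
            (fun n hn => Nat.prime_of_mem_primesBelow hn)
      _ ≤ B * (C * (N : ℝ) ^ (a + 1)) := mul_le_mul_of_nonneg_left (hC N) hBnn
  have hNle : ((N : ℝ)) ^ (a + 1) ≤ (q ^ α) ^ (a + 1) := by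
    apply Real.rpow_le_rpow (Nat.cast_nonneg N) _ (by linarith)
    exact Nat.floor_le (Real.rpow_nonneg hq0.le α)
  have hrw : (q ^ α) ^ (a + 1) = q ^ (α * (a + 1)) := (Real.rpow_mul hq0.le α (a + 1)).symm
  have hnorm : ‖q ^ (α * (a + 1))‖ = q ^ (α * (a + 1)) := by
    rw [Real.norm_eq_abs, abs_of_pos (Real.rpow_pos_of_pos hq0 _)]
  rw [hnorm]
  calc ‖∑ p ∈ s,
      ((p : ℝ) ^ a : ℝ) * FourierTransform.fourier (⇑φ : ℝ → ℂ) (Real.log p / Real.log q)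
        * ((Real.log p : ℝ) : ℂ)‖
      ≤ B * (C * (N : ℝ) ^ (a + 1)) := hbound
    _ ≤ B * (C * q ^ (α * (a + 1))) := by
        apply mul_le_mul_of_nonneg_left _ hBnn
        apply mul_le_mul_of_nonneg_left _ hCpos.le
        rw [← hrw]; exact hNle
    _ = B * C * q ^ (α * (a + 1)) := by ring
end
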